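/- Accuracy-optimization lemma (two-weight case): Let d_0, d_1 > 0 with d_0 + d_1 = 1, let C > 0, p ≥ 1, and let τ, β_0, β_1 be positive functions of h with τ(h) = O(h^m), β_k(h) = a·h^{n1} + b_k·h^{n2} + O(h^{n2+1}) for k = 0,1, where a > 0, n2 > n1 ≥ 1, and m > n1. Define α_k = d_k·(1 + C·(τ/β_k)^p) and ω_k = α_k/(α_0 + α_1). Then ω_k = d_k·(1 + O(h^{p(m−n1)} · h^{n2−n1})) as h → 0⁺; that is, ω_k − d_k = O(h^{p(m−n1)+n2−n1})·d_k. -/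

import Mathlib

set_option maxHeartbeats 1000000
open Real
lemma rpow_sub_rpow_le_aux {p u v : ℝ} (hp : 1 ≤ p) (hu : 0 < u) (huv : u ≤ v) :
    v ^ p - u ^ p ≤ p * v ^ (p - 1) * (v - u) := by
  rcases eq_or_lt_of_le huv with rfl | h
  · simp
  · obtain ⟨c, hc, hcd⟩ := exists_hasDerivAt_eq_slope (fun x => x ^ p)
      (fun x => p * x ^ (p - 1)) h
      (fun x _ => (Real.hasDerivAt_rpow_const (Or.inr hp)).continuousAt.continuousWithinAt)
      (fun x _ => Real.hasDerivAt_rpow_const (Or.inr hp))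

    have hc0 : 0 < c := hu.trans hc.1
    have heq : v ^ p - u ^ p = p * c ^ (p - 1) * (v - u) := by
      rw [hcd, div_mul_cancel₀]
      exact sub_ne_zero.mpr h.ne'
    rw [heq]
    have hle : c ^ (p - 1) ≤ v ^ (p - 1) :=
      Real.rpow_le_rpow hc0.le hc.2.le (by linarith)
    have hp0 : (0:ℝ) ≤ p := by linarith
    have hvu : (0:ℝ) ≤ v - u := by linarith
    gcongr

lemma abs_rpow_sub_rpow_le {p u v : ℝ} (hp : 1 ≤ p) (hu : 0 < u) (hv : 0 < v) :
    |u ^ p - v ^ p| ≤ p * (max u v) ^ (p - 1) * |u - v| := by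
  rcases le_total u v with h | h
  · rw [abs_sub_comm, abs_of_nonneg (sub_nonneg.mpr (Real.rpow_le_rpow hu.le h (by linarith))),
      abs_sub_comm u v, abs_of_nonneg (sub_nonneg.mpr h), max_eq_right h]
    exact rpow_sub_rpow_le_aux hp hu h
  · rw [abs_of_nonneg (sub_nonneg.mpr (Real.rpow_le_rpow hv.le h (by linarith))),
      abs_of_nonneg (sub_nonneg.mpr h), max_eq_left h]
    exact rpow_sub_rpow_le_aux hp hv h

theorem weno_accuracy_optimization
    (d0 d1 C p a b0 b1 : ℝ) (m n1 n2 : ℕ)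
    (τ β0 β1 : ℝ → ℝ)
    (hd0 : 0 < d0) (hd1 : 0 < d1) (hsum : d0 + d1 = 1)
    (hC : 0 < C) (hp : 1 ≤ p) (ha : 0 < a)
    (hn1 : 1 ≤ n1) (hn12 : n1 < n2) (hm : n1 < m)
    (hpos : ∃ ε > 0, ∀ h ∈ Set.Ioo (0:ℝ) ε, 0 < τ h ∧ 0 < β0 h ∧ 0 < β1 h)
    (hτ : ∃ K > 0, ∃ ε > 0, ∀ h ∈ Set.Ioo (0:ℝ) ε, |τ h| ≤ K * h ^ m)
    (hβ0 : ∃ K > 0, ∃ ε > 0, ∀ h ∈ Set.Ioo (0:ℝ) ε,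
      |β0 h - (a * h ^ n1 + b0 * h ^ n2)| ≤ K * h ^ (n2 + 1))
    (hβ1 : ∃ K > 0, ∃ ε > 0, ∀ h ∈ Set.Ioo (0:ℝ) ε,
      |β1 h - (a * h ^ n1 + b1 * h ^ n2)| ≤ K * h ^ (n2 + 1)) :
    ∃ K > 0, ∃ ε > 0, ∀ h ∈ Set.Ioo (0:ℝ) ε,
      |d0 * (1 + C * (τ h / β0 h) ^ p) /
          (d0 * (1 + C * (τ h / β0 h) ^ p) + d1 * (1 + C * (τ h / β1 h) ^ p)) - d0|
        ≤ K * h ^ (p * ((m : ℝ) - (n1 : ℝ)) + ((n2 : ℝ) - (n1 : ℝ))) * d0 ∧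
      |d1 * (1 + C * (τ h / β1 h) ^ p) /
          (d0 * (1 + C * (τ h / β0 h) ^ p) + d1 * (1 + C * (τ h / β1 h) ^ p)) - d1|
        ≤ K * h ^ (p * ((m : ℝ) - (n1 : ℝ)) + ((n2 : ℝ) - (n1 : ℝ))) * d1 := by
  obtain ⟨ε₀, hε₀, hP⟩ := hpos
  obtain ⟨Kτ, hKτ, ε₁, hε₁, hT⟩ := hτ
  obtain ⟨K0, hK0, ε₂, hε₂, hB0⟩ := hβ0
  obtain ⟨K1, hK1, ε₃, hε₃, hB1⟩ := hβ1
  have hd1le : d1 ≤ 1 := by linarith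
  have hd0le : d0 ≤ 1 := by linarith
  have hp0 : (0:ℝ) < p := by linarith
  obtain ⟨B, hB⟩ : ∃ B : ℝ, B = |b0| + |b1| + K0 + K1 + 1 := ⟨_, rfl⟩
  have hBpos : 0 < B := by rw [hB]; positivity
  obtain ⟨D, hD⟩ : ∃ D : ℝ, D = |b0 - b1| + K0 + K1 := ⟨_, rfl⟩
  have hDpos : 0 < D := by rw [hD]; positivity
  obtain ⟨Y, hY⟩ : ∃ Y : ℝ, Y = 2 * Kτ / a := ⟨_, rfl⟩
  have hYpos : 0 < Y := by rw [hY]; positivity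
  obtain ⟨Kx, hKx⟩ : ∃ Kx : ℝ, Kx = p * Y ^ (p - 1) * (4 * Kτ * D / a ^ 2) := ⟨_, rfl⟩
  have hYp : 0 < Y ^ (p - 1) := Real.rpow_pos_of_pos hYpos _
  have hKxpos : 0 < Kx := by rw [hKx]; positivity
  refine ⟨C * Kx, by positivity,
    min (min ε₀ ε₁) (min (min ε₂ ε₃) (min 1 (a / (2 * B)))),
    lt_min (lt_min hε₀ hε₁) (lt_min (lt_min hε₂ hε₃) (lt_min one_pos (by positivity))), ?_⟩
  rintro h ⟨hh0, hhε⟩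
  simp only [lt_min_iff] at hhε
  obtain ⟨⟨he0, he1⟩, ⟨he2, he3⟩, hh1, heB⟩ := hhε
  obtain ⟨hτpos, hβ0pos, hβ1pos⟩ := hP h ⟨hh0, he0⟩
  have hTb := hT h ⟨hh0, he1⟩
  have hB0b := hB0 h ⟨hh0, he2⟩
  have hB1b := hB1 h ⟨hh0, he3⟩
  have hh1' : h ≤ 1 := hh1.le
  have hhn : 0 < h ^ n1 := pow_pos hh0 _
  have ha' : a ≠ 0 := ha.ne'
  have hn1' : h ^ n1 ≠ 0 := hhn.ne'
  have hp21 : h ^ (n2 + 1) ≤ h ^ n2 := pow_le_pow_of_le_one hh0.le hh1' (by omega)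
  have hp2 : h ^ n2 ≤ h * h ^ n1 := by
    calc h ^ n2 = h ^ (n2 - n1) * h ^ n1 := by rw [← pow_add]; congr 1; omega
    _ ≤ h ^ 1 * h ^ n1 := by
        have := pow_le_pow_of_le_one hh0.le hh1' (show 1 ≤ n2 - n1 by omega)
        exact mul_le_mul_of_nonneg_right this hhn.le
    _ = h * h ^ n1 := by ring
  have hBh : B * h ≤ a / 2 := by
    have h2 := (lt_div_iff₀ (by positivity : (0:ℝ) < 2*B)).mp heB
    have e2 : h * (2*B) = 2 * (B * h) := by ring
    linarith
  -- lower bounds on β0, β1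
  have key : ∀ (b : ℝ) (K : ℝ) (β : ℝ), 0 < K → K ≤ K0 + K1 → |b| ≤ |b0| + |b1| →
      |β - (a * h ^ n1 + b * h ^ n2)| ≤ K * h ^ (n2 + 1) → a / 2 * h ^ n1 ≤ β := by
    intro b K β hKpos hKle hble hβb
    have h1 : |β - a * h ^ n1| ≤ K * h ^ (n2+1) + |b| * h ^ n2 := by
      have e : β - a * h ^ n1 = (β - (a * h ^ n1 + b * h ^ n2)) + b * h ^ n2 := by ring
      rw [e]
      refine (abs_add_le _ _).trans ?_
      rw [abs_mul, abs_of_nonneg (pow_pos hh0 n2).le]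
      exact add_le_add_left hβb _
    have h2 : K * h ^ (n2+1) + |b| * h ^ n2 ≤ B * (h * h ^ n1) := by
      have hK' : K * h ^ (n2+1) ≤ K * h ^ n2 := mul_le_mul_of_nonneg_left hp21 hKpos.le
      have hKB : K + |b| ≤ B := by rw [hB]; linarith
      have hKB2 : (K + |b|) * h ^ n2 ≤ B * h ^ n2 :=
        mul_le_mul_of_nonneg_right hKB (pow_pos hh0 n2).le
      have hB2 : B * h ^ n2 ≤ B * (h * h ^ n1) := mul_le_mul_of_nonneg_left hp2 hBpos.le
      linarith
    have h3 : B * (h * h ^ n1) ≤ a / 2 * h ^ n1 := by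
      calc B * (h * h ^ n1) = (B * h) * h ^ n1 := by ring
        _ ≤ a / 2 * h ^ n1 := mul_le_mul_of_nonneg_right hBh hhn.le
    have := (abs_le.mp ((h1.trans h2).trans h3)).1
    linarith
  have hβ0lb : a / 2 * h ^ n1 ≤ β0 h :=
    key b0 K0 (β0 h) hK0 (by linarith) (by linarith [abs_nonneg b1]) hB0b
  have hβ1lb : a / 2 * h ^ n1 ≤ β1 h :=
    key b1 K1 (β1 h) hK1 (by linarith) (by linarith [abs_nonneg b0]) hB1b
  have hdiff : |β0 h - β1 h| ≤ D * h ^ n2 := by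
    have e : β0 h - β1 h = ((β0 h - (a*h^n1 + b0*h^n2)) - (β1 h - (a*h^n1 + b1*h^n2)))
        + (b0 - b1)*h^n2 := by ring
    rw [e]
    refine (abs_add_le _ _).trans ?_
    have h4 : |(β0 h - (a*h^n1 + b0*h^n2)) - (β1 h - (a*h^n1 + b1*h^n2))|
        ≤ K0*h^(n2+1) + K1*h^(n2+1) := (abs_sub _ _).trans (add_le_add hB0b hB1b)
    rw [abs_mul, abs_of_nonneg (pow_pos hh0 n2).le]
    have hb : |b0 - b1| * h ^ n2 ≤ |b0 - b1| * h ^ n2 := le_refl _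
    have e0 := mul_le_mul_of_nonneg_left hp21 hK0.le
    have e1 := mul_le_mul_of_nonneg_left hp21 hK1.le
    rw [hD]; linarith
  -- the ratios
  set y0 := τ h / β0 h with hy0
  set y1 := τ h / β1 h with hy1
  clear_value y0 y1
  have hy0pos : 0 < y0 := by rw [hy0]; exact div_pos hτpos hβ0pos
  have hy1pos : 0 < y1 := by rw [hy1]; exact div_pos hτpos hβ1pos
  have hτle : τ h ≤ Kτ * h ^ m := (le_abs_self _).trans hTb
  have em : h ^ m = h ^ (m - n1) * h ^ n1 := by rw [← pow_add]; congr 1; omega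
  have en : h ^ n2 = h ^ (n2 - n1) * h ^ n1 := by rw [← pow_add]; congr 1; omega
  have hyle : ∀ β : ℝ, a / 2 * h ^ n1 ≤ β → 0 < β → τ h / β ≤ Y * h ^ (m - n1) := by
    intro β hβlb hβpos
    have h5 : τ h / β ≤ (Kτ * h ^ m) / (a/2 * h^n1) :=
      div_le_div₀ (by positivity) hτle (by positivity) hβlb
    refine h5.trans_eq ?_
    rw [em, hY]; field_simp
  have hy0le : y0 ≤ Y * h ^ (m - n1) := by rw [hy0]; exact hyle _ hβ0lb hβ0pos
  have hy1le : y1 ≤ Y * h ^ (m - n1) := by rw [hy1]; exact hyle _ hβ1lb hβ1pos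
  have hydiff : |y0 - y1| ≤ (4 * Kτ * D / a ^ 2) * (h ^ (m - n1) * h ^ (n2 - n1)) := by
    have e : y0 - y1 = τ h * (β1 h - β0 h) / (β0 h * β1 h) := by
      rw [hy0, hy1]; field_simp
    rw [e, abs_div, abs_mul, abs_of_pos (mul_pos hβ0pos hβ1pos)]
    have hnum : |τ h| * |β1 h - β0 h| ≤ (Kτ * h ^ m) * (D * h ^ n2) := by
      refine mul_le_mul hTb ?_ (abs_nonneg _) (by positivity)
      rw [abs_sub_comm]; exact hdiff
    have hden : a/2*h^n1 * (a/2*h^n1) ≤ β0 h * β1 h :=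
      mul_le_mul hβ0lb hβ1lb (by positivity) hβ0pos.le
    refine (div_le_div₀ (by positivity) hnum (by positivity) hden).trans_eq ?_
    rw [em, en]; field_simp; ring
  -- the rpow difference
  have hxd : |y0 ^ p - y1 ^ p| ≤ p * (Y * h ^ (m-n1)) ^ (p-1) * |y0 - y1| := by
    refine (abs_rpow_sub_rpow_le hp hy0pos hy1pos).trans ?_
    have hmax : max y0 y1 ≤ Y * h ^ (m-n1) := max_le hy0le hy1le
    have : (max y0 y1) ^ (p-1) ≤ (Y * h ^ (m-n1)) ^ (p-1) :=
      Real.rpow_le_rpow (le_trans hy0pos.le (le_max_left _ _)) hmax (by linarith)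
    exact mul_le_mul_of_nonneg_right (mul_le_mul_of_nonneg_left this hp0.le) (abs_nonneg _)
  have hpowE : ((h:ℝ) ^ (m-n1)) ^ (p-1) * (h ^ (m - n1) * h ^ (n2 - n1))
      = h ^ (p * ((m:ℝ) - (n1:ℝ)) + ((n2:ℝ) - (n1:ℝ))) := by
    rw [← Real.rpow_natCast h (m-n1), ← Real.rpow_natCast h (n2-n1),
      ← Real.rpow_mul hh0.le, ← Real.rpow_add hh0, ← Real.rpow_add hh0,
      Nat.cast_sub hm.le, Nat.cast_sub hn12.le]
    congr 1; ring
  have hxdE : |y0 ^ p - y1 ^ p| ≤ Kx * h ^ (p * ((m:ℝ) - (n1:ℝ)) + ((n2:ℝ) - (n1:ℝ))) := by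
    refine hxd.trans ?_
    have step : |y0 - y1| ≤ (4 * Kτ * D / a ^ 2) * (h ^ (m - n1) * h ^ (n2 - n1)) := hydiff
    calc p * (Y * h ^ (m-n1)) ^ (p-1) * |y0 - y1|
        ≤ p * (Y * h ^ (m-n1)) ^ (p-1) * ((4 * Kτ * D / a ^ 2) * (h ^ (m - n1) * h ^ (n2 - n1))) := by
          refine mul_le_mul_of_nonneg_left step ?_
          positivity
      _ = Kx * h ^ (p * ((m:ℝ) - (n1:ℝ)) + ((n2:ℝ) - (n1:ℝ))) := by
          rw [Real.mul_rpow hYpos.le (by positivity), hKx, ← hpowE]; ring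
  set x0 := y0 ^ p with hx0e
  set x1 := y1 ^ p with hx1e
  clear_value x0 x1
  have hx0 : 0 < x0 := by rw [hx0e]; exact Real.rpow_pos_of_pos hy0pos p
  have hx1 : 0 < x1 := by rw [hx1e]; exact Real.rpow_pos_of_pos hy1pos p
  have hs1 : 1 ≤ d0 * (1 + C * x0) + d1 * (1 + C * x1) := by
    linarith [mul_pos (mul_pos hC hd0) hx0, mul_pos (mul_pos hC hd1) hx1]
  have hs0 : 0 < d0 * (1 + C * x0) + d1 * (1 + C * x1) := by linarith
  have hEpos : 0 < h ^ (p * ((m:ℝ) - (n1:ℝ)) + ((n2:ℝ) - (n1:ℝ))) := Real.rpow_pos_of_pos hh0 _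
  constructor
  · have e0 : d0 * (1 + C * x0) / (d0 * (1 + C * x0) + d1 * (1 + C * x1)) - d0
        = C * d0 * d1 * (x0 - x1) / (d0 * (1 + C * x0) + d1 * (1 + C * x1)) := by
      rw [div_sub' hs0.ne']
      congr 1
      linear_combination (-(d0*(1+C*x0))) * hsum
    rw [e0, abs_div, abs_of_pos hs0, abs_mul, abs_mul, abs_mul,
      abs_of_pos hC, abs_of_pos hd0, abs_of_pos hd1]
    have h6 : C * d0 * d1 * |x0 - x1| / (d0 * (1 + C * x0) + d1 * (1 + C * x1))
        ≤ C * d0 * d1 * |x0 - x1| :=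
      div_le_self (by positivity) hs1
    refine h6.trans ?_
    have h7 : d1 * |x0 - x1| ≤ 1 * (Kx * h ^ (p * ((m:ℝ) - (n1:ℝ)) + ((n2:ℝ) - (n1:ℝ)))) :=
      mul_le_mul hd1le hxdE (abs_nonneg _) zero_le_one
    calc C * d0 * d1 * |x0 - x1| = (C * d0) * (d1 * |x0 - x1|) := by ring
      _ ≤ (C * d0) * (1 * (Kx * h ^ (p * ((m:ℝ) - (n1:ℝ)) + ((n2:ℝ) - (n1:ℝ))))) :=
        mul_le_mul_of_nonneg_left h7 (by positivity)
      _ = C * Kx * h ^ (p * ((m:ℝ) - (n1:ℝ)) + ((n2:ℝ) - (n1:ℝ))) * d0 := by ring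
  · have e1 : d1 * (1 + C * x1) / (d0 * (1 + C * x0) + d1 * (1 + C * x1)) - d1
        = C * d0 * d1 * (x1 - x0) / (d0 * (1 + C * x0) + d1 * (1 + C * x1)) := by
      rw [div_sub' hs0.ne']
      congr 1
      linear_combination (-(d1*(1+C*x1))) * hsum
    rw [e1, abs_div, abs_of_pos hs0, abs_mul, abs_mul, abs_mul,
      abs_of_pos hC, abs_of_pos hd0, abs_of_pos hd1]
    have h6 : C * d0 * d1 * |x1 - x0| / (d0 * (1 + C * x0) + d1 * (1 + C * x1))
        ≤ C * d0 * d1 * |x1 - x0| :=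
      div_le_self (by positivity) hs1
    refine h6.trans ?_
    have hsym : |x1 - x0| = |x0 - x1| := abs_sub_comm _ _
    rw [hsym]
    have h7 : d0 * |x0 - x1| ≤ 1 * (Kx * h ^ (p * ((m:ℝ) - (n1:ℝ)) + ((n2:ℝ) - (n1:ℝ)))) :=
      mul_le_mul hd0le hxdE (abs_nonneg _) zero_le_one
    calc C * d0 * d1 * |x0 - x1| = (C * d1) * (d0 * |x0 - x1|) := by ring
      _ ≤ (C * d1) * (1 * (Kx * h ^ (p * ((m:ℝ) - (n1:ℝ)) + ((n2:ℝ) - (n1:ℝ))))) :=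
        mul_le_mul_of_nonneg_left h7 (by positivity)
      _ = C * Kx * h ^ (p * ((m:ℝ) - (n1:ℝ)) + ((n2:ℝ) - (n1:ℝ))) * d1 := by ring
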